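/- Let (B, ε) be an augmented algebra, N ≥ 1, and let (u_{ij})_{1≤i,j≤N} be elements of B with ε(u_{ij}) = δ_{ij}. Let φ : B → ℂ be a Gaussian generating functional and set φ₁ = Σ_{i=1}^N φ(u_{ii}) and φ₂ = Σ_{i,j=1}^N φ(u_{ii} u_{jj}). Then for every p ≥ 2: Σ_{j₁,…,j_p = 1}^N φ(u_{j₁j₁} u_{j₂j₂} ⋯ u_{j_p j_p}) = (p(p−1)/2) · N^{p−2} · φ₂ − p(p−2) · N^{p−1} · φ₁. -/

import Mathlib

open scoped ComplexOrder

section Aux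

variable {B : Type*} [Ring B] [Algebra ℂ B]

/-- Sum over pairs of distinct positions in a list, of φ of the product. -/
noncomputable def pairPhi (φ : B →ₗ[ℂ] ℂ) : List B → ℂ
  | [] => 0
  | v :: t => (t.map (fun x => φ (v * x))).sum + pairPhi φ t

variable (ε : B →ₐ[ℂ] ℂ) (φ : B →ₗ[ℂ] ℂ)

lemma aux_prod_ker (t : List B) (ht : ∀ x ∈ t, ε x = 0) (hne : t ≠ []) :
    ε t.prod = 0 := by
  induction t with
  | nil => simp at hne
  | cons v s ih =>
    simp only [List.prod_cons, map_mul]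
    rw [ht v (by simp)]
    ring

lemma aux_L2 (hg : ∀ a b c : B, ε a = 0 → ε b = 0 → ε c = 0 → φ (a * b * c) = 0)
    (a b : B) (ha : ε a = 0) (hb : ε b = 0) :
    ∀ t : List B, (∀ x ∈ t, ε x = 0) →
      φ (a * b * (t.map (fun v => 1 + v)).prod) = φ (a * b) := by
  intro t
  induction t with
  | nil => simp
  | cons v s ih =>
    intro ht
    have hv : ε v = 0 := ht v (by simp)
    have hs : ∀ x ∈ s, ε x = 0 := fun x hx => ht x (by simp [hx])
    have hP : ((v :: s).map (fun v => 1 + v)).prod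
        = (s.map (fun v => 1 + v)).prod + v * (s.map (fun v => 1 + v)).prod := by
      simp [add_mul]
    rw [hP, mul_add, map_add, ih hs]
    have : φ (a * b * (v * (s.map (fun v => 1 + v)).prod)) = 0 := by
      rw [show a * b * (v * (s.map (fun v => 1 + v)).prod)
          = a * b * (v * (s.map (fun v => 1 + v)).prod) from rfl]
      by_cases hsnil : s = []
      · subst hsnil
        simpa using hg a b v ha hb hv
      · have : ε (v * (s.map (fun v => 1 + v)).prod) = 0 := by
          rw [map_mul, hv, zero_mul]
        exact hg a b _ ha hb this
    rw [this, add_zero]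

lemma aux_L1 (hg : ∀ a b c : B, ε a = 0 → ε b = 0 → ε c = 0 → φ (a * b * c) = 0)
    (a : B) (ha : ε a = 0) :
    ∀ t : List B, (∀ x ∈ t, ε x = 0) →
      φ (a * (t.map (fun v => 1 + v)).prod) = φ a + (t.map (fun x => φ (a * x))).sum := by
  intro t
  induction t with
  | nil => simp
  | cons v s ih =>
    intro ht
    have hv : ε v = 0 := ht v (by simp)
    have hs : ∀ x ∈ s, ε x = 0 := fun x hx => ht x (by simp [hx])
    have hP : a * ((v :: s).map (fun v => 1 + v)).prod
        = a * (s.map (fun v => 1 + v)).prod + (a * v) * (s.map (fun v => 1 + v)).prod := by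
      simp [add_mul, mul_add, mul_assoc]
    rw [hP, map_add, ih hs, aux_L2 ε φ hg a v ha hv s hs]
    simp only [List.map_cons, List.sum_cons]
    ring

lemma aux_L0 (hφ1 : φ 1 = 0)
    (hg : ∀ a b c : B, ε a = 0 → ε b = 0 → ε c = 0 → φ (a * b * c) = 0) :
    ∀ t : List B, (∀ x ∈ t, ε x = 0) →
      φ ((t.map (fun v => 1 + v)).prod) = (t.map (fun x => φ x)).sum + pairPhi φ t := by
  intro t
  induction t with
  | nil => simpa [pairPhi] using hφ1
  | cons v s ih =>
    intro ht
    have hv : ε v = 0 := ht v (by simp)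
    have hs : ∀ x ∈ s, ε x = 0 := fun x hx => ht x (by simp [hx])
    have hP : ((v :: s).map (fun v => 1 + v)).prod
        = (s.map (fun v => 1 + v)).prod + v * (s.map (fun v => 1 + v)).prod := by
      simp [add_mul]
    rw [hP, map_add, ih hs, aux_L1 ε φ hg v hv s hs]
    simp only [List.map_cons, List.sum_cons, pairPhi]
    ring

lemma aux_pairPhi_ofFn (φ : B →ₗ[ℂ] ℂ) :
    ∀ (p : ℕ) (f : Fin p → B),
      pairPhi φ (List.ofFn f) = ∑ k : Fin p, ∑ l ∈ Finset.Ioi k, φ (f k * f l) := by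
  intro p
  induction p with
  | zero => intro f; simp [pairPhi]
  | succ n ih =>
    intro f
    rw [List.ofFn_succ]
    simp only [pairPhi]
    rw [ih (fun i => f i.succ)]
    rw [Fin.sum_univ_succ]
    congr 1
    · rw [Fin.sum_Ioi_zero]
      rw [List.map_ofFn, List.sum_ofFn]
      rfl
    · exact Finset.sum_congr rfl fun i _ => (Fin.sum_Ioi_succ (fun l => φ (f i.succ * f l)) i).symm

end Aux

section Count

lemma aux_sum_eval {ι : Type*} [Fintype ι] [DecidableEq ι] {N : ℕ} (k : ι) (g : Fin N → ℂ) :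
    ∑ j : ι → Fin N, g (j k) = (N : ℂ) ^ (Fintype.card ι - 1) * ∑ i, g i := by
  classical
  rw [← Equiv.sum_comp (Equiv.funSplitAt k (Fin N)).symm (fun j => g (j k))]
  rw [Fintype.sum_prod_type]
  have : ∀ (a : Fin N) (f : { j // j ≠ k } → Fin N),
      ((Equiv.funSplitAt k (Fin N)).symm (a, f)) k = a := by
    intro a f
    simp [Equiv.funSplitAt, Equiv.piSplitAt]
  simp only [this]
  rw [Finset.sum_comm]
  simp only [Finset.sum_const, Finset.card_univ]
  have hc : Fintype.card ({ j // j ≠ k } → Fin N) = N ^ (Fintype.card ι - 1) := by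
    rw [Fintype.card_fun, Fintype.card_fin]
    congr 1
    rw [Fintype.card_subtype_compl, Fintype.card_subtype_eq]
  rw [hc]
  simp [mul_comm]

end Count

section Count2

lemma aux_sum_eval2 {ι : Type*} [Fintype ι] [DecidableEq ι] {N : ℕ} {k l : ι} (hkl : k ≠ l)
    (g : Fin N → Fin N → ℂ) :
    ∑ j : ι → Fin N, g (j k) (j l)
      = (N : ℂ) ^ (Fintype.card ι - 2) * ∑ i, ∑ i', g i i' := by
  classical
  rw [← Equiv.sum_comp (Equiv.funSplitAt k (Fin N)).symm (fun j => g (j k) (j l))]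
  rw [Fintype.sum_prod_type]
  have hk : ∀ (a : Fin N) (f : { j // j ≠ k } → Fin N),
      ((Equiv.funSplitAt k (Fin N)).symm (a, f)) k = a := by
    intro a f; simp [Equiv.funSplitAt, Equiv.piSplitAt]
  have hl : ∀ (a : Fin N) (f : { j // j ≠ k } → Fin N),
      ((Equiv.funSplitAt k (Fin N)).symm (a, f)) l = f ⟨l, Ne.symm hkl⟩ := by
    intro a f
    simp [Equiv.funSplitAt, Equiv.piSplitAt, Ne.symm hkl]
  simp only [hk, hl]
  have hcard : Fintype.card { j // j ≠ k } = Fintype.card ι - 1 := by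
    rw [Fintype.card_subtype_compl, Fintype.card_subtype_eq]
  have : ∀ a : Fin N, ∑ f : { j // j ≠ k } → Fin N, g a (f ⟨l, Ne.symm hkl⟩)
      = (N : ℂ) ^ (Fintype.card ι - 2) * ∑ i', g a i' := by
    intro a
    rw [aux_sum_eval (⟨l, Ne.symm hkl⟩ : { j // j ≠ k }) (fun i' => g a i'), hcard,
      Nat.sub_sub]
  simp only [this]
  rw [Finset.mul_sum]

end Count2

/-- Let `(u_{ij})` be elements of an augmented algebra `(B, ε)` with
`ε(u_{ij}) = δ_{ij}`, let `φ` be a Gaussian generating functional, and set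
`φ₁ = Σ_i φ(u_{ii})`, `φ₂ = Σ_{i,j} φ(u_{ii} u_{jj})`. Then for every `p ≥ 2`,
`Σ_{j₁,…,j_p} φ(u_{j₁j₁} ⋯ u_{j_pj_p})
  = (p(p−1)/2) N^{p−2} φ₂ − p(p−2) N^{p−1} φ₁`. -/
theorem stmt_13 {B : Type*} [Ring B] [Algebra ℂ B] [StarRing B]
    (ε : B →ₐ[ℂ] ℂ) (φ : B →ₗ[ℂ] ℂ)
    (hφ1 : φ 1 = 0)
    (hφherm : ∀ b : B, φ (star b) = starRingEnd ℂ (φ b))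
    (hφpos : ∀ b : B, ε b = 0 → 0 ≤ φ (star b * b))
    (hφgauss : ∀ a b c : B, ε a = 0 → ε b = 0 → ε c = 0 → φ (a * b * c) = 0)
    {N : ℕ} (hN : 1 ≤ N) (u : Fin N → Fin N → B)
    (hu : ∀ i j, ε (u i j) = if i = j then 1 else 0)
    (φ₁ φ₂ : ℂ)
    (hφ₁ : φ₁ = ∑ i : Fin N, φ (u i i))
    (hφ₂ : φ₂ = ∑ i : Fin N, ∑ j : Fin N, φ (u i i * u j j))
    {p : ℕ} (hp : 2 ≤ p) :
    (∑ j : Fin p → Fin N, φ (List.ofFn fun k => u (j k) (j k)).prod) =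
      (p : ℂ) * ((p : ℂ) - 1) / 2 * (N : ℂ) ^ (p - 2) * φ₂
        - (p : ℂ) * ((p : ℂ) - 2) * (N : ℂ) ^ (p - 1) * φ₁ := by
  classical
  set v : Fin N → B := fun i => u i i - 1 with hv_def
  have hv : ∀ i, ε (v i) = 0 := by
    intro i
    simp [hv_def, hu i i]
  -- value of φ₁, φ₂ in terms of v
  have hT1 : (∑ i, φ (v i)) = φ₁ := by
    rw [hφ₁]
    exact Finset.sum_congr rfl fun i _ => by simp [hv_def, map_sub, hφ1]
  have hQ : (∑ i, ∑ i', φ (v i * v i')) = φ₂ - 2 * (N : ℂ) * φ₁ := by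
    have hexp : ∀ i i' : Fin N, φ (v i * v i')
        = φ (u i i * u i' i') - φ (u i i) - φ (u i' i') := by
      intro i i'
      have : v i * v i' = u i i * u i' i' - u i i - u i' i' + 1 := by
        simp only [hv_def]
        noncomm_ring
      rw [this]
      simp [map_add, map_sub, hφ1]
    simp only [hexp, Finset.sum_sub_distrib, Finset.sum_const, Finset.card_univ,
      Fintype.card_fin, nsmul_eq_mul, hφ₁, hφ₂]
    rw [← Finset.mul_sum]
    ring
  -- rewrite each term
  have hlist : ∀ j : Fin p → Fin N,
      (List.ofFn fun k => u (j k) (j k))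
        = ((List.ofFn fun k => v (j k)).map fun x => 1 + x) := by
    intro j
    rw [List.map_ofFn]
    congr 1
    funext k
    show u (j k) (j k) = 1 + (u (j k) (j k) - 1)
    abel
  have hterm : ∀ j : Fin p → Fin N,
      φ (List.ofFn fun k => u (j k) (j k)).prod
        = (∑ k : Fin p, φ (v (j k)))
          + ∑ k : Fin p, ∑ l ∈ Finset.Ioi k, φ (v (j k) * v (j l)) := by
    intro j
    have hmem : ∀ x ∈ (List.ofFn fun k => v (j k)), ε x = 0 := by
      intro x hx
      rw [List.mem_ofFn] at hx
      obtain ⟨k, rfl⟩ := hx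
      exact hv _
    rw [hlist j, aux_L0 ε φ hφ1 hφgauss _ hmem, aux_pairPhi_ofFn]
    congr 1
    rw [List.map_ofFn, List.sum_ofFn]
    rfl
  simp only [hterm]
  rw [Finset.sum_add_distrib]
  -- part A
  have hA : (∑ j : Fin p → Fin N, ∑ k : Fin p, φ (v (j k)))
      = (p : ℂ) * ((N : ℂ) ^ (p - 1) * φ₁) := by
    rw [Finset.sum_comm]
    have h1 : ∀ k : Fin p, (∑ j : Fin p → Fin N, φ (v (j k)))
        = (N : ℂ) ^ (p - 1) * φ₁ := by
      intro k
      rw [aux_sum_eval k (fun i => φ (v i)), Fintype.card_fin, hT1]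
    simp only [h1, Finset.sum_const, Finset.card_univ, Fintype.card_fin, nsmul_eq_mul]
  -- part B
  set C : ℕ := ∑ k : Fin p, (Finset.Ioi k).card with hC_def
  have hB : (∑ j : Fin p → Fin N, ∑ k : Fin p, ∑ l ∈ Finset.Ioi k, φ (v (j k) * v (j l)))
      = (C : ℂ) * ((N : ℂ) ^ (p - 2) * (φ₂ - 2 * (N : ℂ) * φ₁)) := by
    rw [Finset.sum_comm]
    have h1 : ∀ k : Fin p, (∑ j : Fin p → Fin N, ∑ l ∈ Finset.Ioi k, φ (v (j k) * v (j l)))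
        = ((Finset.Ioi k).card : ℂ) * ((N : ℂ) ^ (p - 2) * (φ₂ - 2 * (N : ℂ) * φ₁)) := by
      intro k
      rw [Finset.sum_comm]
      have h2 : ∀ l ∈ Finset.Ioi k, (∑ j : Fin p → Fin N, φ (v (j k) * v (j l)))
          = (N : ℂ) ^ (p - 2) * (φ₂ - 2 * (N : ℂ) * φ₁) := by
        intro l hl
        have hkl : k ≠ l := ne_of_lt (Finset.mem_Ioi.mp hl)
        rw [aux_sum_eval2 hkl (fun i i' => φ (v i * v i')), Fintype.card_fin, hQ]
      rw [Finset.sum_congr rfl h2, Finset.sum_const, nsmul_eq_mul]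
    rw [Finset.sum_congr rfl fun k _ => h1 k, ← Finset.sum_mul]
    norm_cast
  rw [hA, hB]
  -- count C
  have hC2 : (C : ℂ) = (p : ℂ) * ((p : ℂ) - 1) / 2 := by
    have hnat : C * 2 = p * (p - 1) := by
      have : C = ∑ k ∈ Finset.range p, (p - 1 - k) := by
        rw [hC_def]
        simp only [Fin.card_Ioi]
        exact Fin.sum_univ_eq_sum_range (fun k => p - 1 - k) p
      rw [this, Finset.sum_range_reflect (fun k => k) p]
      exact Finset.sum_range_id_mul_two p
    have : ((C * 2 : ℕ) : ℂ) = ((p * (p - 1) : ℕ) : ℂ) := by rw [hnat]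
    push_cast [Nat.cast_sub (show (1:ℕ) ≤ p by omega)] at this
    linear_combination this / 2
  have hpow : (N : ℂ) ^ (p - 1) = (N : ℂ) ^ (p - 2) * (N : ℂ) := by
    rw [← pow_succ]
    congr 1
    omega
  rw [hC2, hpow]
  ring
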